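/- Let K ⊆ L be languages over Σ and let γ ∈ Σ be a symbol not occurring in any string of L. Define L' = pr(Lγ) and K' = pr(Kγ ∪ L). Then there exist observers f_1,…,f_n (f_i : Σ* → V_i) and a fusion rule f : V_1 × ⋯ × V_n → Bool solving the observation problem Obs(f, L, K, (Σ_io)) if and only if there exist controllers g_1^γ,…,g_n^γ and a fusion rule g^γ solving the control problem Con(L', K', (Σ_io), {γ}). (Solvability equivalence of observation problems and control problems, Theorem 7.) -/
import Mathlib


open List

/-- Natural projection onto a subalphabet: keep only symbols in `A`. -/
def natProj {α : Type*} (A : Set α) [DecidablePred (· ∈ A)] (s : List α) : List α :=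
  s.filter (fun a => decide (a ∈ A))

/-- Observers `obs` together with fusion rule `f` solve the observation problem
`Obs(f, L, K, (Sio i))`. -/
def SolvesObs {α : Type*} {n : ℕ} {V : Fin n → Type*} (f : (∀ i, V i) → Bool)
    (obs : ∀ i, List α → V i) (L K : Set (List α))
    (Sio : Fin n → Set α) [∀ i, DecidablePred (· ∈ Sio i)] : Prop :=
  ∀ s ∈ L,
    (s ∈ K → f (fun i => obs i (natProj (Sio i) s)) = true) ∧
    (s ∈ L \ K → f (fun i => obs i (natProj (Sio i) s)) = false)

/-- `s` is positive (contains the fault event `σf`) for at least `m` steps. -/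
def PosSteps {α : Type*} (σf : α) (m : ℕ) (s : List α) : Prop :=
  ∃ π τ : List α, s = π ++ [σf] ++ τ ∧ m ≤ τ.length

/-- Observers `obs` together with fusion rule `f` solve the diagnosis problem
`Dx(f, L, (Sio i), σf, m)`. -/
def SolvesDx {α : Type*} {n : ℕ} {V : Fin n → Type*} (f : (∀ i, V i) → Bool)
    (obs : ∀ i, List α → V i) (L : Set (List α))
    (Sio : Fin n → Set α) [∀ i, DecidablePred (· ∈ Sio i)]
    (σf : α) (m : ℕ) : Prop :=
  ∀ s ∈ L,
    (PosSteps σf m s → f (fun i => obs i (natProj (Sio i) s)) = true) ∧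
    (σf ∉ s → f (fun i => obs i (natProj (Sio i) s)) = false)

/-- Controllers `con σ` together with fusion rules `fus σ`, for `σ ∈ Sc`, solve the
control problem `Con(L, K, (Sio i), Sc)`. -/
def SolvesCon {α : Type*} {n : ℕ} {V : Fin n → Type*} (fus : α → (∀ i, V i) → Bool)
    (con : α → ∀ i, List α → V i) (L K : Set (List α))
    (Sio : Fin n → Set α) [∀ i, DecidablePred (· ∈ Sio i)] (Sc : Set α) : Prop :=
  ∀ σ ∈ Sc, ∀ s ∈ K,
    (s ++ [σ] ∈ K → fus σ (fun i => con σ i (natProj (Sio i) s)) = true) ∧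
    (s ++ [σ] ∈ L \ K → fus σ (fun i => con σ i (natProj (Sio i) s)) = false)

/-- Prefix closure of a language. -/
def pr {α : Type*} (M : Set (List α)) : Set (List α) := {s | ∃ t ∈ M, s <+: t}

/-- `Mγ`: every string of `M` extended by the symbol `γ`. -/
def catSym {α : Type*} (M : Set (List α)) (γ : α) : Set (List α) :=
  {t | ∃ s ∈ M, t = s ++ [γ]}


lemma concat_prefix_eq {α : Type*} {γ : α} {s m : List α} (hm : γ ∉ m)
    (h : s ++ [γ] <+: m ++ [γ]) : s = m := by
  rcases le_or_gt (s ++ [γ]).length m.length with hle | hlt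
  · exact absurd ((List.prefix_of_prefix_length_le h (List.prefix_append m [γ]) hle).sublist.subset
      (by simp)) hm
  · have : (m ++ [γ]).length ≤ (s ++ [γ]).length := by
      rw [List.length_append, List.length_append]
      rw [List.length_append] at hlt
      have hb : ([γ] : List _).length = 1 := rfl
      omega
    have heq := h.sublist.eq_of_length_le this
    exact List.append_cancel_right heq

lemma mem_of_concat_mem_prK {α : Type*} {γ : α} {L K : Set (List α)} (hKL : K ⊆ L)
    (hγ : ∀ s ∈ L, γ ∉ s) {s : List α}
    (h : s ++ [γ] ∈ pr (catSym K γ ∪ L)) : s ∈ K := by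
  obtain ⟨t, ht, hpre⟩ := h
  rcases ht with ⟨k, hk, rfl⟩ | htL
  · have := concat_prefix_eq (hγ k (hKL hk)) hpre
    exact this ▸ hk
  · exact absurd (hpre.sublist.subset (by simp)) (hγ t htL)

lemma mem_of_concat_mem_prL {α : Type*} {γ : α} {L : Set (List α)}
    (hγ : ∀ s ∈ L, γ ∉ s) {s : List α}
    (h : s ++ [γ] ∈ pr (catSym L γ)) : s ∈ L := by
  obtain ⟨t, ⟨l, hl, rfl⟩, hpre⟩ := h
  have := concat_prefix_eq (hγ l hl) hpre
  exact this ▸ hl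

/-- **Theorem 7 (solvability equivalence of Obs and Con).** With `L' = pr(Lγ)` and
`K' = pr(Kγ ∪ L)`, there exist observers and a fusion rule solving
`Obs(f, L, K, (Sio i))` iff there exist controllers and a fusion rule solving
`Con(L', K', (Sio i), {γ})`. -/
theorem obs_solvable_iff_con_solvable {α : Type*} {n : ℕ}
    (L K : Set (List α)) (hKL : K ⊆ L)
    (Sio : Fin n → Set α) [∀ i, DecidablePred (· ∈ Sio i)]
    (γ : α) (hγ : ∀ s ∈ L, γ ∉ s) :
    (∃ (V : Fin n → Type) (f : (∀ i, V i) → Bool) (obs : ∀ i, List α → V i),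
        SolvesObs f obs L K Sio) ↔
      (∃ (W : Fin n → Type) (g : (∀ i, W i) → Bool) (con : ∀ i, List α → W i),
        SolvesCon (fun _ => g) (fun _ => con)
          (pr (catSym L γ)) (pr (catSym K γ ∪ L)) Sio {γ}) := by
  constructor
  · rintro ⟨V, f, obs, hobs⟩
    refine ⟨V, f, obs, ?_⟩
    rintro σ hσ s hs
    obtain rfl : σ = γ := hσ
    constructor
    · intro hK
      have hsK : s ∈ K := mem_of_concat_mem_prK hKL hγ hK
      exact (hobs s (hKL hsK)).1 hsK
    · rintro ⟨hL', hK'⟩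
      have hsL : s ∈ L := mem_of_concat_mem_prL hγ hL'
      have hsK : s ∉ K := fun hk => hK' ⟨s ++ [σ], Or.inl ⟨s, hk, rfl⟩, List.prefix_refl _⟩
      exact (hobs s hsL).2 ⟨hsL, hsK⟩
  · rintro ⟨W, g, con, hcon⟩
    refine ⟨W, g, con, ?_⟩
    intro s hs
    have hsK' : s ∈ pr (catSym K γ ∪ L) := ⟨s, Or.inr hs, List.prefix_refl _⟩
    have h := hcon γ rfl s hsK'
    constructor
    · intro hsK
      exact h.1 ⟨s ++ [γ], Or.inl ⟨s, hsK, rfl⟩, List.prefix_refl _⟩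
    · rintro ⟨-, hsK⟩
      refine h.2 ⟨⟨s ++ [γ], ⟨s, hs, rfl⟩, List.prefix_refl _⟩, ?_⟩
      intro hmem
      exact hsK (mem_of_concat_mem_prK hKL hγ hmem)
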